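/- Let α be a type and let u and v be freely reduced words over α × Bool. Let k be a natural number with k ≤ |u| and k ≤ |v| such that the length-k prefix of inv(u) equals the length-k prefix of v, and suppose k is maximal in the sense that either k = |u|, or k = |v|, or the letter of inv(u) in position k differs from the letter of v in position k. Then the word u[:|u|−k] ++ v[k:] is freely reduced, and FreeGroup.mk (u[:|u|−k] ++ v[k:]) = FreeGroup.mk u * FreeGroup.mk v in the free group on α. -/

import Mathlib

/-- A word over `α × Bool` is freely reduced if it contains no adjacent pair
`(x, b) (x, !b)`. -/
def Reduced {α : Type*} (w : List (α × Bool)) : Prop :=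
  ∀ (x : α) (b : Bool), ¬ ([(x, b), (x, !b)] <:+: w)

/-- The formal inverse of a word over `α × Bool`: the reverse of the word with
every letter's Boolean component negated. -/
def invWord {α : Type*} (w : List (α × Bool)) : List (α × Bool) :=
  (w.map fun p => (p.1, !p.2)).reverse

lemma reduced_iff_chain {α : Type*} (w : List (α × Bool)) :
    Reduced w ↔ w.Chain' (fun p q => q ≠ (p.1, !p.2)) := by
  induction w with
  | nil => constructor <;> intro _ <;> simp [Reduced, List.Chain']
  | cons a l ih =>
    rw [List.Chain', List.isChain_cons]
    constructor
    · intro h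
      refine ⟨?_, ih.1 fun x b hxb => h x b (hxb.trans (List.infix_cons_iff.2 (Or.inr List.infix_rfl)))⟩
      intro q hq hqe
      exact h a.1 a.2 (by
        subst hqe
        refine List.infix_cons_iff.2 (Or.inl ?_)
        cases l with
        | nil => simp at hq
        | cons c l' =>
          simp only [List.head?_cons, Option.mem_def, Option.some_inj] at hq
          subst hq
          exact ⟨l', by simp⟩)
    · rintro ⟨h1, h2⟩ x b hxb
      rcases List.infix_cons_iff.1 hxb with h | h
      · rcases h with ⟨t, ht⟩
        cases l with
        | nil => simp at ht
        | cons c l' =>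
          simp only [List.cons_append, List.cons.injEq] at ht
          obtain ⟨rfl, rfl, -⟩ := ht
          exact h1 _ rfl rfl
      · exact ih.2 h2 x b h

lemma invWord_eq {α : Type*} : @invWord α = FreeGroup.invRev := rfl


/-- Correctness of Lohrey's cancellation step: if `u` and `v` are freely reduced
and `k` is the length of the maximal common prefix of `inv(u)` and `v`, then
`u[:|u|-k] ++ v[k:]` is freely reduced and represents the product of the elements
represented by `u` and `v` in the free group. -/
theorem lohrey_cancellation {α : Type*} (u v : List (α × Bool))
    (hu : Reduced u) (hv : Reduced v) (k : ℕ)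
    (hku : k ≤ u.length) (hkv : k ≤ v.length)
    (hpre : (invWord u).take k = v.take k)
    (hmax : k = u.length ∨ k = v.length ∨ (invWord u)[k]? ≠ v[k]?) :
    Reduced (u.take (u.length - k) ++ v.drop k) ∧
      FreeGroup.mk (u.take (u.length - k) ++ v.drop k) =
        FreeGroup.mk u * FreeGroup.mk v := by
  set u1 := u.take (u.length - k) with hu1
  set u2 := u.drop (u.length - k) with hu2
  have hsplit : u = u1 ++ u2 := (List.take_append_drop _ u).symm
  have hinv : invWord u = invWord u2 ++ invWord u1 := by
    rw [invWord, hsplit]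
    simp [invWord, hu1, hu2]
  have hlen2 : (invWord u2).length = k := by
    simp [invWord, hu2]; omega
  have htake : (invWord u).take k = invWord u2 := by
    rw [hinv, List.take_left' hlen2]
  have hu2v : u2 = invWord (v.take k) := by
    have : invWord u2 = v.take k := htake.symm.trans hpre
    rw [← this, invWord_eq, FreeGroup.invRev_invRev]
  constructor
  · rw [reduced_iff_chain]
    rw [List.Chain', List.isChain_append]
    refine ⟨(reduced_iff_chain _).1 ?_, (reduced_iff_chain _).1 ?_, ?_⟩
    · exact fun x b h => hu x b (h.trans (u.take_prefix _).isInfix)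
    · exact fun x b h => hv x b (h.trans (v.drop_suffix _).isInfix)
    · intro x hx y hy hyeq
      have hu1ne : u1 ≠ [] := by intro he; rw [he] at hx; simp at hx
      have hvne : v.drop k ≠ [] := by intro he; rw [he] at hy; simp at hy
      have hklt : k < u.length := by
        by_contra h
        have : u.length - k = 0 := by omega
        apply hu1ne; rw [hu1, this, List.take_zero]
      have hklv : k < v.length := by
        by_contra h
        apply hvne; rw [List.drop_eq_nil_iff]; omega
      rcases hmax with h | h | h
      · omega
      · omega
      apply h
      have h1 : (invWord u)[k]? = (invWord u1).head? := by
        rw [hinv, List.getElem?_append_right (by omega), hlen2, Nat.sub_self,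
          ← List.head?_eq_getElem?]
      have h2 : (invWord u1).head? = u1.getLast?.map (fun p => (p.1, !p.2)) := by
        rw [invWord, List.head?_reverse, List.getLast?_map]
      have h3 : v[k]? = (v.drop k).head? := by
        rw [List.head?_eq_getElem?, List.getElem?_drop, Nat.add_zero]
      rw [h1, h2, h3, Option.mem_def.1 hx, Option.mem_def.1 hy, hyeq]
      rfl
  · rw [← FreeGroup.mul_mk]
    conv_rhs => rw [hsplit, ← v.take_append_drop k, ← FreeGroup.mul_mk,
      ← FreeGroup.mul_mk]
    rw [hu2v, invWord_eq, ← FreeGroup.inv_mk]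
    group
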